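/- For C ≥ 2 and C−1 ≤ ρ₁ < C, the function Φ(z) = (1/z)·(ρ₁+Cz)^C/C! − Σ_{m=0}^{C−1} (ρ₁+Cz)^m/m! is strictly positive for all z > 0, hence has no root. -/

import Mathlib

open Real Set

theorem stmt_4 (C : ℕ) (hC : 2 ≤ C) (ρ₁ : ℝ) (hρ₁ : (C : ℝ) - 1 ≤ ρ₁) (hρ₁C : ρ₁ < C)
    (Φ : ℝ → ℝ)
    (hΦ : ∀ z : ℝ, Φ z = (1 / z) * (ρ₁ + (C : ℝ) * z) ^ C / (Nat.factorial C : ℝ)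
        - ∑ m ∈ Finset.range C, (ρ₁ + (C : ℝ) * z) ^ m / (Nat.factorial m : ℝ)) :
    ∀ z : ℝ, 0 < z → 0 < Φ z := by
  intro z hz
  rw [hΦ]
  set x : ℝ := ρ₁ + (C : ℝ) * z with hx
  have hC1 : (1:ℝ) ≤ (C:ℝ) - 1 := by
    have : (2:ℝ) ≤ (C:ℝ) := by exact_mod_cast hC
    linarith
  have hCz : 0 < (C:ℝ) * z := by positivity
  have hxpos : 0 < x := by rw [hx]; linarith
  have hxC1 : (C:ℝ) - 1 < x := by rw [hx]; linarith
  set S : ℝ := ∑ m ∈ Finset.range C, x ^ m / (Nat.factorial m : ℝ) with hS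
  have hS0 : 0 ≤ S := by
    apply Finset.sum_nonneg
    intro m _
    positivity
  -- telescoping identity
  have tele : ∑ m ∈ Finset.range C, (x - m) * x ^ m / (Nat.factorial m : ℝ)
      = (C:ℝ) * x ^ C / (Nat.factorial C : ℝ) := by
    have h := Finset.sum_range_sub (f := fun m => (m:ℝ) * x ^ m / (Nat.factorial m : ℝ)) C
    simp only [Nat.cast_zero, zero_mul, zero_div, sub_zero] at h
    rw [← h]
    apply Finset.sum_congr rfl
    intro m _
    have hf : ((Nat.factorial (m+1)) : ℝ) = (m+1) * (Nat.factorial m : ℝ) := by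
      exact_mod_cast Nat.factorial_succ m
    have hm : (Nat.factorial m : ℝ) ≠ 0 := by positivity
    simp only [hf, pow_succ]
    push_cast
    field_simp
  -- the gap sum
  have key : (x - ((C:ℝ) - 1)) * S
      = (C:ℝ) * x ^ C / (Nat.factorial C : ℝ)
        - ∑ m ∈ Finset.range C, ((C:ℝ) - 1 - m) * x ^ m / (Nat.factorial m : ℝ) := by
    rw [← tele, hS, Finset.mul_sum, ← Finset.sum_sub_distrib]
    apply Finset.sum_congr rfl
    intro m _
    ring
  have gappos : (0:ℝ) < ∑ m ∈ Finset.range C, ((C:ℝ) - 1 - m) * x ^ m / (Nat.factorial m : ℝ) := by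
    have h0 : (0:ℕ) ∈ Finset.range C := Finset.mem_range.mpr (by omega)
    have hle : ((C:ℝ) - 1 - (0:ℕ)) * x ^ (0:ℕ) / (Nat.factorial 0 : ℝ)
        ≤ ∑ m ∈ Finset.range C, ((C:ℝ) - 1 - m) * x ^ m / (Nat.factorial m : ℝ) := by
      apply Finset.single_le_sum (f := fun (m : ℕ) => ((C:ℝ) - 1 - (m:ℝ)) * x ^ m / (Nat.factorial m : ℝ)) _ h0
      intro m hm
      have hmC : (m:ℝ) ≤ (C:ℝ) - 1 := by
        have : m + 1 ≤ C := Finset.mem_range.mp hm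
        have : (m:ℝ) + 1 ≤ (C:ℝ) := by exact_mod_cast this
        linarith
      have h1 : 0 ≤ (C:ℝ) - 1 - m := by linarith
      positivity
    have : ((C:ℝ) - 1 - (0:ℕ)) * x ^ (0:ℕ) / (Nat.factorial 0 : ℝ) = (C:ℝ) - 1 := by
      simp
    linarith
  -- main chain
  have h1 : ((C:ℝ) * z) * S ≤ (x - ((C:ℝ) - 1)) * S := by
    apply mul_le_mul_of_nonneg_right _ hS0
    rw [hx]; linarith
  have h2 : ((C:ℝ) * z) * S < (C:ℝ) * x ^ C / (Nat.factorial C : ℝ) := by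
    rw [key] at h1
    linarith
  have hCpos : (0:ℝ) < (C:ℝ) := by linarith
  have h3 : z * S < x ^ C / (Nat.factorial C : ℝ) := by
    rw [mul_assoc, mul_div_assoc] at h2
    exact (mul_lt_mul_iff_right₀ hCpos).mp h2
  have goal' : S < 1 / z * x ^ C / (Nat.factorial C : ℝ) := by
    have hF : (Nat.factorial C : ℝ) ≠ 0 := by positivity
    rw [show 1 / z * x ^ C / (Nat.factorial C : ℝ) = (x ^ C / (Nat.factorial C : ℝ)) / z by
      ring]
    rw [lt_div_iff₀ hz]
    nlinarith [h3]
  linarith
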